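/- Let n ≥ 1 and let Γ = Γ(U_{6n}) be the non-commuting graph of U_{6n}. Then for 0 ≤ r ≤ n−1 and k ∈ {1,2}: (1) deg_Γ(a^{2r+1}) = 4n; (2) deg_Γ(a^{2r+1}b^k) = 4n; (3) deg_Γ(a^{2r}b^k) = 3n. -/

import Mathlib

/-- The inversion automorphism of `Multiplicative (ZMod 3)` (i.e. `b ↦ b⁻¹`). -/
def negAut : MulAut (Multiplicative (ZMod 3)) := MulEquiv.inv (Multiplicative (ZMod 3))

lemma negAut_sq : negAut * negAut = 1 := by
  ext x
  simp [negAut]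

/-- The action of `ZMod (2*n)` on `Multiplicative (ZMod 3)`, where the generator acts
by inversion (negation). -/
def U6nAct (n : ℕ) : Multiplicative (ZMod (2 * n)) →* MulAut (Multiplicative (ZMod 3)) :=
  AddMonoidHom.toMultiplicativeLeft
    (ZMod.lift (2 * n) ⟨zmultiplesHom _ (Additive.ofMul negAut), by
      show ((2 * n : ℕ) : ℤ) • Additive.ofMul negAut = 0
      have : negAut ^ (2 * n) = 1 := by
        rw [pow_mul, pow_two, negAut_sq, one_pow]
      rw [← zpow_natCast negAut, Nat.cast_mul] at this
      rw [show ((2 * n : ℕ) : ℤ) • Additive.ofMul negAut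
            = Additive.ofMul (negAut ^ ((2 * n : ℕ) : ℤ)) from rfl]
      rw [Nat.cast_mul, this]; rfl⟩)

/-- The group `U_{6n} = ⟨a, b | a^(2n) = b³ = 1, a⁻¹ b a = b⁻¹⟩`, realized as the
semidirect product `(ZMod 3) ⋊ (ZMod (2n))` where the generator of `ZMod (2n)` acts by
negation. -/
abbrev U6n (n : ℕ) := SemidirectProduct (Multiplicative (ZMod 3))
    (Multiplicative (ZMod (2 * n))) (U6nAct n)

/-- The generator `a` of `U_{6n}`, of order `2n`. -/
def Ua (n : ℕ) : U6n n := SemidirectProduct.inr (Multiplicative.ofAdd 1)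

/-- The generator `b` of `U_{6n}`, of order `3`. -/
def Ub (n : ℕ) : U6n n := SemidirectProduct.inl (Multiplicative.ofAdd 1)

/-- The non-commuting graph of `U_{6n}`: vertices are the non-central elements, two
distinct vertices are adjacent iff they do not commute. -/
def ncGraph (n : ℕ) : SimpleGraph {x : U6n n // x ∉ Subgroup.center (U6n n)} where
  Adj u v := u.val * v.val ≠ v.val * u.val
  symm := ⟨fun _ _ h => fun e => h e.symm⟩
  loopless := ⟨fun _ h => h rfl⟩

lemma negAut_pow (m : ℕ) : negAut ^ m = if Even m then 1 else negAut := by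
  rcases Nat.even_or_odd m with h | h
  · obtain ⟨j, rfl⟩ := h
    rw [if_pos ⟨j, rfl⟩, ← two_mul, pow_mul, pow_two, negAut_sq, one_pow]
  · obtain ⟨j, rfl⟩ := h
    rw [if_neg (by simp [Nat.even_add_one, parity_simps]),
      pow_succ, pow_mul, pow_two, negAut_sq, one_pow, one_mul]

lemma U6nAct_natCast (n m : ℕ) :
    U6nAct n (Multiplicative.ofAdd ((m : ZMod (2 * n)))) = negAut ^ m := by
  simp only [U6nAct, AddMonoidHom.coe_toMultiplicativeLeft, Function.comp_apply, toAdd_ofAdd]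
  rw [show ((m : ℕ) : ZMod (2*n)) = ((m : ℤ) : ZMod (2*n)) by push_cast; rfl]
  rw [ZMod.lift_coe]
  show Additive.toMul ((m : ℤ) • Additive.ofMul negAut) = negAut ^ m
  rw [show (m : ℤ) • Additive.ofMul negAut = Additive.ofMul (negAut ^ (m : ℤ)) from rfl]
  rw [zpow_natCast]
  rfl

lemma Ua_pow (n m : ℕ) :
    Ua n ^ m = SemidirectProduct.inr (Multiplicative.ofAdd ((m : ZMod (2 * n)))) := by
  rw [Ua, ← map_pow]
  congr 1
  rw [← ofAdd_nsmul]
  congr 1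
  simp [nsmul_eq_mul]

lemma Ub_pow (n k : ℕ) :
    Ub n ^ k = SemidirectProduct.inl (Multiplicative.ofAdd ((k : ZMod 3))) := by
  rw [Ub, ← map_pow]
  congr 1
  rw [← ofAdd_nsmul]
  congr 1
  simp [nsmul_eq_mul]

lemma comm_iff (n : ℕ) (x y : U6n n) :
    x * y = y * x ↔
      x.left * U6nAct n x.right y.left = y.left * U6nAct n y.right x.left := by
  constructor
  · intro h
    have := congrArg SemidirectProduct.left h
    simpa [SemidirectProduct.mul_left] using this
  · intro h
    ext
    · simpa [SemidirectProduct.mul_left] using congrArg Multiplicative.toAdd h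
    · simp [SemidirectProduct.mul_right, mul_comm]

def prodEquiv (n : ℕ) :
    U6n n ≃ (Multiplicative (ZMod 3)) × (Multiplicative (ZMod (2 * n))) where
  toFun x := (x.left, x.right)
  invFun p := ⟨p.1, p.2⟩
  left_inv x := rfl
  right_inv p := rfl

lemma card_U6n (n : ℕ) : Nat.card (U6n n) = 6 * n := by
  rw [Nat.card_congr (prodEquiv n), Nat.card_prod,
    Nat.card_congr Multiplicative.toAdd, Nat.card_congr Multiplicative.toAdd,
    Nat.card_zmod, Nat.card_zmod]
  ring

lemma card_graphSet (n : ℕ) (f : ZMod (2 * n) → Multiplicative (ZMod 3)) :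
    Nat.card {y : U6n n | y.left = f (Multiplicative.toAdd y.right)} = 2 * n := by
  have e : {y : U6n n | y.left = f (Multiplicative.toAdd y.right)} ≃ ZMod (2 * n) :=
    { toFun := fun y => Multiplicative.toAdd y.val.right
      invFun := fun t => ⟨⟨f t, Multiplicative.ofAdd t⟩, by simp⟩
      left_inv := fun y => by
        apply Subtype.ext
        ext
        · exact (y.property).symm
        · rfl
      right_inv := fun t => rfl }
  rw [Nat.card_congr e, Nat.card_zmod]

lemma card_evens (n : ℕ) (hn : 1 ≤ n) :
    Nat.card {t : ZMod (2 * n) // Even t.val} = n := by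
  haveI : NeZero (2 * n) := ⟨by omega⟩
  rw [Nat.card_eq_fintype_card, Fintype.card_subtype]
  conv_rhs => rw [← Finset.card_range n]
  refine Finset.card_bij' (fun t _ => t.val / 2) (fun s _ => ((2 * s : ℕ) : ZMod (2 * n))) ?_ ?_ ?_ ?_
  · intro t ht
    have h1 : t.val < 2 * n := ZMod.val_lt t
    exact Finset.mem_range.mpr (by omega)
  · intro s hs
    have hs' : s < n := Finset.mem_range.mp hs
    simp only [Finset.mem_filter, Finset.mem_univ, true_and]
    rw [ZMod.val_cast_of_lt (by omega)]
    exact ⟨s, by ring⟩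
  · intro t ht
    have he : Even t.val := (Finset.mem_filter.mp ht).2
    obtain ⟨j, hj⟩ := he
    have h2 : 2 * (t.val / 2) = t.val := by omega
    rw [h2]
    exact ZMod.natCast_rightInverse t
  · intro s hs
    have hs' : s < n := Finset.mem_range.mp hs
    rw [ZMod.val_cast_of_lt (by omega)]
    omega

lemma card_evenSet (n : ℕ) (hn : 1 ≤ n) :
    Nat.card {y : U6n n | Even (Multiplicative.toAdd y.right).val} = 3 * n := by
  have e : {y : U6n n | Even (Multiplicative.toAdd y.right).val} ≃
      (Multiplicative (ZMod 3)) × {t : ZMod (2 * n) // Even t.val} :=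
    { toFun := fun y => (y.val.left, ⟨Multiplicative.toAdd y.val.right, y.property⟩)
      invFun := fun p => ⟨⟨p.1, Multiplicative.ofAdd p.2.val⟩, p.2.property⟩
      left_inv := fun y => rfl
      right_inv := fun p => rfl }
  rw [Nat.card_congr e, Nat.card_prod, Nat.card_congr Multiplicative.toAdd,
    Nat.card_zmod, card_evens n hn]

lemma deg_eq (n : ℕ) (hn : 1 ≤ n) (x : U6n n) (h : x ∉ Subgroup.center (U6n n))
    (ncGraph : SimpleGraph {x : U6n n // x ∉ Subgroup.center (U6n n)})
    (hG : ∀ u v, ncGraph.Adj u v ↔ u.val * v.val ≠ v.val * u.val) :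
    (ncGraph.neighborSet ⟨x, h⟩).ncard
      = 6 * n - Nat.card {y : U6n n | x * y = y * x} := by
  haveI : NeZero (2 * n) := ⟨by omega⟩
  haveI : Finite (U6n n) := Finite.of_equiv _ (prodEquiv n).symm
  have h1 : Subtype.val '' (ncGraph.neighborSet ⟨x, h⟩)
      = {y : U6n n | x * y = y * x}ᶜ := by
    ext y
    simp only [Set.mem_image, SimpleGraph.mem_neighborSet, Set.mem_compl_iff,
      Set.mem_setOf_eq]
    constructor
    · rintro ⟨⟨y, hy⟩, hadj, rfl⟩
      exact (hG _ _).mp hadj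
    · intro hy
      refine ⟨⟨y, fun hc => hy (Subgroup.mem_center_iff.mp hc x)⟩, (hG _ _).mpr hy, rfl⟩
  have h2 := Set.ncard_add_ncard_compl {y : U6n n | x * y = y * x}
    (Set.toFinite _) (Set.toFinite _)
  rw [card_U6n] at h2
  rw [← Set.ncard_image_of_injective _ Subtype.val_injective, h1,
    ← Nat.card_coe_set_eq, ← Nat.card_coe_set_eq] at *
  omega

lemma m3_1 : ∀ b : Multiplicative (ZMod 3), negAut b = b ↔ b = 1 := by decide
lemma m3_2 : ∀ c b : Multiplicative (ZMod 3),
    c⁻¹ * negAut b = b * c⁻¹ ↔ b = 1 := by decide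
lemma m3_3 : ∀ c b : Multiplicative (ZMod 3),
    c⁻¹ * negAut b = b * negAut c⁻¹ ↔ b = c⁻¹ := by decide
lemma m3_4 : ∀ c b : Multiplicative (ZMod 3),
    c * b = b * negAut c ↔ c = 1 := by decide

lemma not_even_odd (r : ℕ) : ¬ Even (2 * r + 1) := by
  simp [Nat.even_add_one, parity_simps]

lemma y_right_eq (n : ℕ) (hn : 1 ≤ n) (y : U6n n) :
    y.right = Multiplicative.ofAdd
      (((Multiplicative.toAdd y.right).val : ℕ) : ZMod (2 * n)) := by
  haveI : NeZero (2 * n) := ⟨by omega⟩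
  conv_lhs => rw [← ofAdd_toAdd y.right]
  rw [ZMod.natCast_rightInverse (Multiplicative.toAdd y.right)]

lemma case1 (n : ℕ) (hn : 1 ≤ n) (r : ℕ)
    (h : Ua n ^ (2 * r + 1) ∉ Subgroup.center (U6n n))
    (Γ : SimpleGraph {x : U6n n // x ∉ Subgroup.center (U6n n)})
    (hG : ∀ u v, Γ.Adj u v ↔ u.val * v.val ≠ v.val * u.val) :
    (Γ.neighborSet ⟨Ua n ^ (2 * r + 1), h⟩).ncard = 4 * n := by
  rw [deg_eq n hn _ h Γ hG]
  have hS : {y : U6n n | Ua n ^ (2 * r + 1) * y = y * Ua n ^ (2 * r + 1)}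
      = {y : U6n n | y.left = 1} := by
    ext y
    simp only [Set.mem_setOf_eq]
    rw [comm_iff, Ua_pow, SemidirectProduct.left_inr, SemidirectProduct.right_inr,
      U6nAct_natCast, negAut_pow, if_neg (not_even_odd r), map_one, mul_one, one_mul]
    exact m3_1 y.left
  rw [hS]
  have := card_graphSet n (fun _ => 1)
  rw [this]
  omega

lemma case2 (n : ℕ) (hn : 1 ≤ n) (r : ℕ) (k : ℕ)
    (h : Ua n ^ (2 * r + 1) * Ub n ^ k ∉ Subgroup.center (U6n n))
    (Γ : SimpleGraph {x : U6n n // x ∉ Subgroup.center (U6n n)})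
    (hG : ∀ u v, Γ.Adj u v ↔ u.val * v.val ≠ v.val * u.val) :
    (Γ.neighborSet ⟨Ua n ^ (2 * r + 1) * Ub n ^ k, h⟩).ncard = 4 * n := by
  rw [deg_eq n hn _ h Γ hG]
  set x := Ua n ^ (2 * r + 1) * Ub n ^ k with hxdef
  have hl : x.left = (Multiplicative.ofAdd ((k : ZMod 3)))⁻¹ := by
    rw [hxdef, Ua_pow, Ub_pow, SemidirectProduct.mul_left, SemidirectProduct.left_inr,
      SemidirectProduct.left_inl, SemidirectProduct.right_inr, one_mul,
      U6nAct_natCast, negAut_pow, if_neg (not_even_odd r)]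
    rfl
  have hr' : x.right = Multiplicative.ofAdd (((2 * r + 1 : ℕ)) : ZMod (2 * n)) := by
    rw [hxdef, Ua_pow, Ub_pow, SemidirectProduct.mul_right, SemidirectProduct.right_inr,
      SemidirectProduct.right_inl, mul_one]
  have hS : {y : U6n n | x * y = y * x}
      = {y : U6n n | y.left =
          if Even (Multiplicative.toAdd y.right).val then 1
          else (Multiplicative.ofAdd ((k : ZMod 3)))⁻¹} := by
    ext y
    simp only [Set.mem_setOf_eq]
    rw [comm_iff, hl, hr', U6nAct_natCast, negAut_pow, if_neg (not_even_odd r)]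
    conv_lhs => rw [y_right_eq n hn y]
    rw [U6nAct_natCast, negAut_pow]
    by_cases hE : Even (Multiplicative.toAdd y.right).val
    · rw [if_pos hE, if_pos hE, MulAut.one_apply]
      exact m3_2 _ y.left
    · rw [if_neg hE, if_neg hE]
      exact m3_3 _ y.left
  rw [hS]
  have := card_graphSet n
    (fun t => if Even t.val then 1 else (Multiplicative.ofAdd ((k : ZMod 3)))⁻¹)
  rw [this]
  omega

lemma case3 (n : ℕ) (hn : 1 ≤ n) (r : ℕ) (k : ℕ) (hk : k = 1 ∨ k = 2)
    (h : Ua n ^ (2 * r) * Ub n ^ k ∉ Subgroup.center (U6n n))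
    (Γ : SimpleGraph {x : U6n n // x ∉ Subgroup.center (U6n n)})
    (hG : ∀ u v, Γ.Adj u v ↔ u.val * v.val ≠ v.val * u.val) :
    (Γ.neighborSet ⟨Ua n ^ (2 * r) * Ub n ^ k, h⟩).ncard = 3 * n := by
  rw [deg_eq n hn _ h Γ hG]
  set x := Ua n ^ (2 * r) * Ub n ^ k with hxdef
  have hl : x.left = Multiplicative.ofAdd ((k : ZMod 3)) := by
    rw [hxdef, Ua_pow, Ub_pow, SemidirectProduct.mul_left, SemidirectProduct.left_inr,
      SemidirectProduct.left_inl, SemidirectProduct.right_inr, one_mul,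
      U6nAct_natCast, negAut_pow, if_pos ⟨r, by ring⟩, MulAut.one_apply]
  have hr' : x.right = Multiplicative.ofAdd (((2 * r : ℕ)) : ZMod (2 * n)) := by
    rw [hxdef, Ua_pow, Ub_pow, SemidirectProduct.mul_right, SemidirectProduct.right_inr,
      SemidirectProduct.right_inl, mul_one]
  have hκ : (Multiplicative.ofAdd ((k : ZMod 3))) ≠ 1 := by
    rcases hk with rfl | rfl <;> decide
  have hS : {y : U6n n | x * y = y * x}
      = {y : U6n n | Even (Multiplicative.toAdd y.right).val} := by
    ext y
    simp only [Set.mem_setOf_eq]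
    rw [comm_iff, hl, hr', U6nAct_natCast, negAut_pow, if_pos ⟨r, by ring⟩,
      MulAut.one_apply]
    conv_lhs => rw [y_right_eq n hn y]
    rw [U6nAct_natCast, negAut_pow]
    by_cases hE : Even (Multiplicative.toAdd y.right).val
    · rw [if_pos hE, MulAut.one_apply]
      simp [hE, mul_comm]
    · rw [if_neg hE]
      simp only [hE, iff_false]
      rw [m3_4 _ y.left]
      exact hκ
  rw [hS, card_evenSet n hn]
  omega

/-- Degrees in the non-commuting graph of `U_{6n}`: for `0 ≤ r ≤ n-1` and `k ∈ {1,2}`,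
the vertices `a^(2r+1)` and `a^(2r+1)·b^k` have degree `4n`, and the vertices
`a^(2r)·b^k` have degree `3n`. -/
theorem U6n_degrees (n : ℕ) (hn : 1 ≤ n) (r : ℕ) (hr : r < n) (k : ℕ)
    (hk : k = 1 ∨ k = 2) :
    (∀ h : Ua n ^ (2 * r + 1) ∉ Subgroup.center (U6n n),
      ((ncGraph n).neighborSet ⟨Ua n ^ (2 * r + 1), h⟩).ncard = 4 * n) ∧
    (∀ h : Ua n ^ (2 * r + 1) * Ub n ^ k ∉ Subgroup.center (U6n n),
      ((ncGraph n).neighborSet ⟨Ua n ^ (2 * r + 1) * Ub n ^ k, h⟩).ncard = 4 * n) ∧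
    (∀ h : Ua n ^ (2 * r) * Ub n ^ k ∉ Subgroup.center (U6n n),
      ((ncGraph n).neighborSet ⟨Ua n ^ (2 * r) * Ub n ^ k, h⟩).ncard = 3 * n) := by
  refine ⟨fun h => case1 n hn r h (ncGraph n) (fun u v => by unfold ncGraph; exact Iff.rfl),
    fun h => case2 n hn r k h (ncGraph n) (fun u v => by unfold ncGraph; exact Iff.rfl),
    fun h => case3 n hn r k hk h (ncGraph n) (fun u v => by unfold ncGraph; exact Iff.rfl)⟩
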